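/- Let a = p₁p₂, b = p₁(1−p₂), c = (1−p₁)p₂, d = (1−p₁)(1−p₂) with p₁,p₂ ∈ (0,1). The 5×5 stochastic matrix A with rows [d, b, 0, 0, a+c], [0, a+b+d, c, 0, 0], [0, b, d, 0, a+c], [a+b, 0, 0, c+d, 0], [0, 0, 0, 0, 1] has second-largest eigenvalue ξ₂ = max(1−p₁, ((1−c+d) + √((1−c+d)² + 4(bc+cd−d)))/2). -/

import Mathlib

lemma spec_iff5 (M : Matrix (Fin 5) (Fin 5) ℂ) (z : ℂ) :
    z ∈ spectrum ℂ M ↔ (z • (1 : Matrix (Fin 5) (Fin 5) ℂ) - M).det = 0 := by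
  rw [spectrum.mem_iff, Matrix.isUnit_iff_isUnit_det, isUnit_iff_ne_zero, not_ne_iff,
    Algebra.algebraMap_eq_smul_one]

set_option maxHeartbeats 2000000 in
lemma det5' (z a b c d : ℂ) :
    (!![z - d, -b, 0, 0, -(a + c);
        0, z - (a + b + d), -c, 0, 0;
        0, -b, z - d, 0, -(a + c);
        -(a + b), 0, 0, z - (c + d), 0;
        0, 0, 0, 0, z - 1]).det
      = (z - 1) * (z - (c + d)) * (z - d) * ((z - (a + b + d)) * (z - d) - b * c) := by
  simp [Matrix.det_succ_row_zero, Fin.sum_univ_succ, Fin.succAbove]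
  ring

lemma matsub (a b c d : ℝ) (z : ℂ) :
    z • (1 : Matrix (Fin 5) (Fin 5) ℂ) -
      (!![d, b, 0, 0, a + c;
          0, a + b + d, c, 0, 0;
          0, b, d, 0, a + c;
          a + b, 0, 0, c + d, 0;
          0, 0, 0, 0, 1] : Matrix (Fin 5) (Fin 5) ℝ).map (Complex.ofReal)
    = !![z - (d:ℂ), -(b:ℂ), 0, 0, -((a:ℂ) + (c:ℂ));
         0, z - ((a:ℂ) + (b:ℂ) + (d:ℂ)), -(c:ℂ), 0, 0;
         0, -(b:ℂ), z - (d:ℂ), 0, -((a:ℂ) + (c:ℂ));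
         -((a:ℂ) + (b:ℂ)), 0, 0, z - ((c:ℂ) + (d:ℂ)), 0;
         0, 0, 0, 0, z - 1] := by
  ext i j
  fin_cases i <;> fin_cases j <;>
    simp [Matrix.smul_apply, Matrix.one_apply, Matrix.map_apply, Matrix.vecHead,
      Matrix.vecTail] <;> push_cast <;> ring

set_option maxHeartbeats 1000000 in
theorem key (p₁ p₂ : ℝ) (hp₁ : 0 < p₁ ∧ p₁ < 1) (hp₂ : 0 < p₂ ∧ p₂ < 1)
    (a b c d : ℝ) (ha : a = p₁ * p₂) (hb : b = p₁ * (1 - p₂))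
    (hc : c = (1 - p₁) * p₂) (hd : d = (1 - p₁) * (1 - p₂)) :
    ((max (1 - p₁) ((1 - c + d + Real.sqrt ((1 - c + d) ^ 2 + 4 * (b * c + c * d - d))) / 2) : ℝ) : ℂ)
      ∈ spectrum ℂ ((!![d, b, 0, 0, a + c;
          0, a + b + d, c, 0, 0;
          0, b, d, 0, a + c;
          a + b, 0, 0, c + d, 0;
          0, 0, 0, 0, 1] : Matrix (Fin 5) (Fin 5) ℝ).map (Complex.ofReal)) ∧
      ∀ z ∈ spectrum ℂ ((!![d, b, 0, 0, a + c;
          0, a + b + d, c, 0, 0;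
          0, b, d, 0, a + c;
          a + b, 0, 0, c + d, 0;
          0, 0, 0, 0, 1] : Matrix (Fin 5) (Fin 5) ℝ).map (Complex.ofReal)), z ≠ 1 →
        ‖z‖ ≤ max (1 - p₁) ((1 - c + d + Real.sqrt ((1 - c + d) ^ 2 + 4 * (b * c + c * d - d))) / 2) := by
  obtain ⟨hp1a, hp1b⟩ := hp₁
  obtain ⟨hp2a, hp2b⟩ := hp₂
  set r : ℝ := Real.sqrt ((1 - c + d) ^ 2 + 4 * (b * c + c * d - d)) with hr
  set lam : ℝ := (1 - c + d + r) / 2 with hlam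
  set mu : ℝ := (1 - c + d - r) / 2 with hmu
  have hb0 : 0 ≤ b := by rw [hb]; nlinarith
  have hc0 : 0 ≤ c := by rw [hc]; nlinarith
  have hd0 : 0 ≤ d := by rw [hd]; nlinarith
  have habd : a + b = 1 - c - d := by rw [ha, hb, hc, hd]; ring
  have hab0 : 0 ≤ a + b := by rw [ha, hb]; nlinarith
  have hΔeq : (1 - c + d) ^ 2 + 4 * (b * c + c * d - d) = (a + b) ^ 2 + 4 * (b * c) := by
    have h1 : d = 1 - c - (a + b) := by linarith
    rw [h1]; ring
  have hΔ0 : 0 ≤ (1 - c + d) ^ 2 + 4 * (b * c + c * d - d) := by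
    rw [hΔeq]; positivity
  have hr0 : 0 ≤ r := Real.sqrt_nonneg _
  have hr2 : r ^ 2 = (1 - c + d) ^ 2 + 4 * (b * c + c * d - d) := Real.sq_sqrt hΔ0
  have hrab : a + b ≤ r := by nlinarith [mul_nonneg hb0 hc0]
  have hcd : c + d = 1 - p₁ := by rw [hc, hd]; ring
  have hsum : lam + mu = a + b + 2 * d := by rw [hlam, hmu]; field_simp; linarith
  have hprod : lam * mu = (a + b + d) * d - b * c := by
    have : lam * mu = ((1 - c + d) ^ 2 - r ^ 2) / 4 := by rw [hlam, hmu]; ring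
    rw [this, hr2, habd]; ring
  have h1c : 1 - c - d = a + b := by linarith
  have hlam_ge : 1 - c ≤ lam := by rw [hlam]; linarith
  have hdc : d ≤ 1 - c := by linarith
  have hd_le_lam : d ≤ lam := by linarith
  have hlam0 : 0 ≤ lam := by linarith
  have hmu_le : mu ≤ lam := by rw [hlam, hmu]; linarith
  have hmu_ge : -lam ≤ mu := by rw [hlam, hmu]; linarith
  have hsumC : (lam : ℂ) + (mu : ℂ) = (a : ℂ) + (b : ℂ) + 2 * (d : ℂ) := by
    exact_mod_cast congrArg Complex.ofReal hsum
  have hprodC : (lam : ℂ) * (mu : ℂ) = ((a : ℂ) + (b : ℂ) + (d : ℂ)) * (d : ℂ) - (b : ℂ) * (c : ℂ) := by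
    exact_mod_cast congrArg Complex.ofReal hprod
  have hfac : ∀ z : ℂ, (z - ((a : ℂ) + (b : ℂ) + (d : ℂ))) * (z - (d : ℂ)) - (b : ℂ) * (c : ℂ)
      = (z - (lam : ℂ)) * (z - (mu : ℂ)) := by
    intro z; linear_combination z * hsumC - hprodC
  have hspec : ∀ z : ℂ, z ∈ spectrum ℂ ((!![d, b, 0, 0, a + c;
          0, a + b + d, c, 0, 0;
          0, b, d, 0, a + c;
          a + b, 0, 0, c + d, 0;
          0, 0, 0, 0, 1] : Matrix (Fin 5) (Fin 5) ℝ).map (Complex.ofReal)) ↔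
      (z - 1) * (z - ((c : ℂ) + (d : ℂ))) * (z - (d : ℂ)) * ((z - (lam : ℂ)) * (z - (mu : ℂ))) = 0 := by
    intro z
    rw [spec_iff5, matsub a b c d z, det5', hfac z]
  constructor
  · rw [hspec]
    rcases le_total lam (1 - p₁) with h | h
    · rw [max_eq_left h]
      have : ((1 - p₁ : ℝ) : ℂ) - ((c : ℂ) + (d : ℂ)) = 0 := by
        push_cast [← hcd]; ring
      rw [this]; ring
    · rw [max_eq_right h]
      have : ((lam : ℝ) : ℂ) - (lam : ℂ) = 0 := by ring
      rw [mul_assoc]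
      simp [this]
  · intro z hz hz1
    rw [hspec] at hz
    have hle1 : (1 : ℝ) - p₁ ≤ max (1 - p₁) lam := le_max_left _ _
    have hle2 : lam ≤ max (1 - p₁) lam := le_max_right _ _
    rcases mul_eq_zero.mp hz with h | h
    · rcases mul_eq_zero.mp h with h | h
      · rcases mul_eq_zero.mp h with h | h
        · exact absurd (sub_eq_zero.mp h) hz1
        · have : z = ((c + d : ℝ) : ℂ) := by push_cast; exact sub_eq_zero.mp h
          rw [this, Complex.norm_real, Real.norm_eq_abs, abs_of_nonneg (by linarith : (0:ℝ) ≤ c + d)]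
          rw [hcd]; exact hle1
      · have : z = ((d : ℝ) : ℂ) := sub_eq_zero.mp h
        rw [this, Complex.norm_real, Real.norm_eq_abs, abs_of_nonneg hd0]
        linarith
    · rcases mul_eq_zero.mp h with h | h
      · have : z = ((lam : ℝ) : ℂ) := sub_eq_zero.mp h
        rw [this, Complex.norm_real, Real.norm_eq_abs, abs_of_nonneg hlam0]
        exact hle2
      · have : z = ((mu : ℝ) : ℂ) := sub_eq_zero.mp h
        rw [this, Complex.norm_real, Real.norm_eq_abs]
        have : |mu| ≤ lam := abs_le.mpr ⟨by linarith, hmu_le⟩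
        linarith

/-- The 5×5 transition matrix of the absorbing chain for the secondary user's
inter-delivery exponent has second-largest eigenvalue
`ξ₂ = max(1-p₁, ((1-c+d) + √((1-c+d)² + 4(bc+cd-d)))/2)`. -/
theorem stmt15 (p₁ p₂ : ℝ) (hp₁ : 0 < p₁ ∧ p₁ < 1) (hp₂ : 0 < p₂ ∧ p₂ < 1)
    (a b c d : ℝ) (ha : a = p₁ * p₂) (hb : b = p₁ * (1 - p₂))
    (hc : c = (1 - p₁) * p₂) (hd : d = (1 - p₁) * (1 - p₂)) :
    let A : Matrix (Fin 5) (Fin 5) ℝ :=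
      !![d, b, 0, 0, a + c;
         0, a + b + d, c, 0, 0;
         0, b, d, 0, a + c;
         a + b, 0, 0, c + d, 0;
         0, 0, 0, 0, 1]
    let ξ₂ : ℝ :=
      max (1 - p₁) ((1 - c + d + Real.sqrt ((1 - c + d) ^ 2 + 4 * (b * c + c * d - d))) / 2)
    (ξ₂ : ℂ) ∈ spectrum ℂ (A.map (Complex.ofReal)) ∧
      ∀ z ∈ spectrum ℂ (A.map (Complex.ofReal)), z ≠ 1 → ‖z‖ ≤ ξ₂ := by
  exact key p₁ p₂ hp₁ hp₂ a b c d ha hb hc hd
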